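/- Let n ≥ 1, let P, Q, R₁, …, R₈ be invertible real n×n matrices, and let g be a nonzero real n×n matrix satisfying Rᵢ·g·Rᵢ⁻¹ = g for all i = 1,…,8, P·g·P⁻¹ = ε₁·g and Q·g·Q⁻¹ = ε₂·g with ε₁, ε₂ ∈ {1, −1} and (ε₁, ε₂) ≠ (1, 1). Then there exists a nonzero element ξ ∈ ⋀²(ℝ⁸) ⊗ Mₙ(ℝ) fixed by all of the maps ⋀²A_α ⊗ id, ⋀²A_β ⊗ id, ⋀²A_γ ⊗ (X ↦ PXP⁻¹), ⋀²A_δ ⊗ (X ↦ QXQ⁻¹), and id ⊗ (X ↦ RᵢXRᵢ⁻¹) for each i; indeed ξ can be taken of the form e ⊗ g with e ∈ {e₁, e₂, e₃}, choosing e₃ if ε₁ = ε₂ = −1, e₁ if (ε₁, ε₂) = (1, −1), and e₂ if (ε₁, ε₂) = (−1, 1). -/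

import Mathlib

set_option maxHeartbeats 1000000
set_option synthInstance.maxHeartbeats 400000

noncomputable section

open ExteriorAlgebra TensorProduct Matrix

/-- The standard basis vector `fᵢ` of `ℝ⁸`. -/
def fvec (i : Fin 8) : Fin 8 → ℝ := Pi.single i 1

/-- `f_{ij} = fᵢ ∧ fⱼ` in the exterior algebra of `ℝ⁸`. -/
def wdg (i j : Fin 8) : ExteriorAlgebra ℝ (Fin 8 → ℝ) := ι ℝ (fvec i) * ι ℝ (fvec j)

/-- `e₁ = f₁₂+f₃₄+f₅₆+f₇₈` (zero-based indices). -/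
def e1 : ExteriorAlgebra ℝ (Fin 8 → ℝ) := wdg 0 1 + wdg 2 3 + wdg 4 5 + wdg 6 7
/-- `e₂ = f₁₃−f₂₄+f₅₇−f₆₈` (zero-based indices). -/
def e2 : ExteriorAlgebra ℝ (Fin 8 → ℝ) := wdg 0 2 - wdg 1 3 + wdg 4 6 - wdg 5 7
/-- `e₃ = f₁₄+f₂₃+f₅₈+f₆₇` (zero-based indices). -/
def e3 : ExteriorAlgebra ℝ (Fin 8 → ℝ) := wdg 0 3 + wdg 1 2 + wdg 4 7 + wdg 5 6

/-- The diagonal linear map `diag(s)` of `ℝ⁸`. -/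
def diagL (s : Fin 8 → ℝ) : (Fin 8 → ℝ) →ₗ[ℝ] (Fin 8 → ℝ) :=
  LinearMap.pi fun i => s i • LinearMap.proj i

/-- The linear map of the exterior algebra induced by `diag(s)` (so `⋀²diag(s)` on degree-2
elements, satisfying `(⋀L)(u∧v) = Lu ∧ Lv`). -/
def extL (s : Fin 8 → ℝ) :
    ExteriorAlgebra ℝ (Fin 8 → ℝ) →ₗ[ℝ] ExteriorAlgebra ℝ (Fin 8 → ℝ) :=
  (ExteriorAlgebra.map (diagL s)).toLinearMap

/-- Conjugation `X ↦ P·X·P⁻¹` as a linear map on `n×n` matrices. -/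
def conjL (n : ℕ) (P : Matrix (Fin n) (Fin n) ℝ) :
    Matrix (Fin n) (Fin n) ℝ →ₗ[ℝ] Matrix (Fin n) (Fin n) ℝ :=
  (LinearMap.mulLeft ℝ P).comp (LinearMap.mulRight ℝ P⁻¹)

lemma diagL_fvec (s : Fin 8 → ℝ) (k : Fin 8) : diagL s (fvec k) = s k • fvec k := by
  ext k'
  by_cases hk : k' = k <;> simp [diagL, fvec, Pi.single_apply, hk]

lemma extL_wdg (s : Fin 8 → ℝ) (i j : Fin 8) : extL s (wdg i j) = (s i * s j) • wdg i j := by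
  simp only [extL, wdg, AlgHom.toLinearMap_apply, _root_.map_mul, map_apply_ι, diagL_fvec,
    _root_.map_smul]
  rw [smul_mul_assoc, mul_smul_comm, smul_smul]

/-- A coordinate functional detecting `wdg a b`. -/
def phiab (a b : Fin 8) : ExteriorAlgebra ℝ (Fin 8 → ℝ) →ₗ[ℝ] ℝ :=
  liftAlternating (Pi.single 2
    ((Matrix.detRowAlternating).compLinearMap (LinearMap.funLeft ℝ ℝ ![a, b])))

lemma wdg_eq_iMulti (i j : Fin 8) : wdg i j = ιMulti ℝ 2 ![fvec i, fvec j] := by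
  simp [wdg, ExteriorAlgebra.ιMulti_apply, List.ofFn_succ]

lemma phiab_wdg (a b i j : Fin 8) :
    phiab a b (wdg i j) = fvec i a * fvec j b - fvec i b * fvec j a := by
  rw [wdg_eq_iMulti, phiab, liftAlternating_apply_ιMulti, Pi.single_eq_same]
  have hdet : ∀ M : Matrix (Fin 2) (Fin 2) ℝ,
      Matrix.detRowAlternating M = M 0 0 * M 1 1 - M 0 1 * M 1 0 := fun M => Matrix.det_fin_two M
  simp only [AlternatingMap.compLinearMap_apply]
  refine (hdet _).trans ?_
  simp [LinearMap.funLeft]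

lemma phi_e1 : phiab 0 1 e1 = 1 := by
  simp only [e1, map_add, phiab_wdg]
  norm_num [fvec, Pi.single_apply, Fin.ext_iff, show ((0:Fin 8):ℕ) = 0 from rfl, show ((1:Fin 8):ℕ) = 1 from rfl, show ((2:Fin 8):ℕ) = 2 from rfl, show ((3:Fin 8):ℕ) = 3 from rfl, show ((4:Fin 8):ℕ) = 4 from rfl, show ((5:Fin 8):ℕ) = 5 from rfl, show ((6:Fin 8):ℕ) = 6 from rfl, show ((7:Fin 8):ℕ) = 7 from rfl]

lemma phi_e2 : phiab 0 2 e2 = 1 := by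
  simp only [e2, map_add, map_sub, phiab_wdg]
  norm_num [fvec, Pi.single_apply, Fin.ext_iff, show ((0:Fin 8):ℕ) = 0 from rfl, show ((1:Fin 8):ℕ) = 1 from rfl, show ((2:Fin 8):ℕ) = 2 from rfl, show ((3:Fin 8):ℕ) = 3 from rfl, show ((4:Fin 8):ℕ) = 4 from rfl, show ((5:Fin 8):ℕ) = 5 from rfl, show ((6:Fin 8):ℕ) = 6 from rfl, show ((7:Fin 8):ℕ) = 7 from rfl]

lemma phi_e3 : phiab 0 3 e3 = 1 := by
  simp only [e3, map_add, phiab_wdg]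
  norm_num [fvec, Pi.single_apply, Fin.ext_iff, show ((0:Fin 8):ℕ) = 0 from rfl, show ((1:Fin 8):ℕ) = 1 from rfl, show ((2:Fin 8):ℕ) = 2 from rfl, show ((3:Fin 8):ℕ) = 3 from rfl, show ((4:Fin 8):ℕ) = 4 from rfl, show ((5:Fin 8):ℕ) = 5 from rfl, show ((6:Fin 8):ℕ) = 6 from rfl, show ((7:Fin 8):ℕ) = 7 from rfl]

lemma vec8_val (a0 a1 a2 a3 a4 a5 a6 a7 : ℝ) :
    (![a0,a1,a2,a3,a4,a5,a6,a7] : Fin 8 → ℝ) 0 = a0 ∧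
    (![a0,a1,a2,a3,a4,a5,a6,a7] : Fin 8 → ℝ) 1 = a1 ∧
    (![a0,a1,a2,a3,a4,a5,a6,a7] : Fin 8 → ℝ) 2 = a2 ∧
    (![a0,a1,a2,a3,a4,a5,a6,a7] : Fin 8 → ℝ) 3 = a3 ∧
    (![a0,a1,a2,a3,a4,a5,a6,a7] : Fin 8 → ℝ) 4 = a4 ∧
    (![a0,a1,a2,a3,a4,a5,a6,a7] : Fin 8 → ℝ) 5 = a5 ∧
    (![a0,a1,a2,a3,a4,a5,a6,a7] : Fin 8 → ℝ) 6 = a6 ∧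
    (![a0,a1,a2,a3,a4,a5,a6,a7] : Fin 8 → ℝ) 7 = a7 :=
  ⟨rfl, rfl, rfl, rfl, rfl, rfl, rfl, rfl⟩

lemma tmul_ne_zero' {n : ℕ} (e : ExteriorAlgebra ℝ (Fin 8 → ℝ))
    (φ : ExteriorAlgebra ℝ (Fin 8 → ℝ) →ₗ[ℝ] ℝ) (hφ : φ e = 1)
    (g : Matrix (Fin n) (Fin n) ℝ) (hg : g ≠ 0) : e ⊗ₜ[ℝ] g ≠ 0 := by
  intro h
  set F : ExteriorAlgebra ℝ (Fin 8 → ℝ) ⊗[ℝ] Matrix (Fin n) (Fin n) ℝ →ₗ[ℝ]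
      Matrix (Fin n) (Fin n) ℝ :=
    (TensorProduct.lid ℝ (Matrix (Fin n) (Fin n) ℝ)).toLinearMap.comp
      (TensorProduct.map φ LinearMap.id) with hF
  have h2 := congrArg F h
  rw [LinearMap.map_zero, hF] at h2
  simp only [LinearMap.comp_apply, TensorProduct.map_tmul, hφ, LinearMap.id_apply,
    LinearEquiv.coe_coe, lid_tmul, one_smul] at h2
  exact hg h2

lemma conjL_apply {n : ℕ} (P g : Matrix (Fin n) (Fin n) ℝ) :
    conjL n P g = P * g * P⁻¹ := by
  simp [conjL, mul_assoc]

-- eigenvalue computations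
lemma eA_e1 : extL ![-1,-1,-1,-1,1,1,1,1] e1 = e1 := by
  simp only [e1, map_add, extL_wdg]; norm_num [vec8_val]
lemma eA_e2 : extL ![-1,-1,-1,-1,1,1,1,1] e2 = e2 := by
  simp only [e2, map_add, map_sub, extL_wdg]; norm_num [vec8_val]
lemma eA_e3 : extL ![-1,-1,-1,-1,1,1,1,1] e3 = e3 := by
  simp only [e3, map_add, extL_wdg]; norm_num [vec8_val]
lemma eB_e1 : extL ![1,1,1,1,-1,-1,-1,-1] e1 = e1 := by
  simp only [e1, map_add, extL_wdg]; norm_num [vec8_val]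
lemma eB_e2 : extL ![1,1,1,1,-1,-1,-1,-1] e2 = e2 := by
  simp only [e2, map_add, map_sub, extL_wdg]; norm_num [vec8_val]
lemma eB_e3 : extL ![1,1,1,1,-1,-1,-1,-1] e3 = e3 := by
  simp only [e3, map_add, extL_wdg]; norm_num [vec8_val]
lemma eC_e1 : extL ![-1,-1,1,1,-1,-1,1,1] e1 = e1 := by
  simp only [e1, map_add, extL_wdg]; norm_num [vec8_val]
lemma eC_e2 : extL ![-1,-1,1,1,-1,-1,1,1] e2 = -e2 := by
  simp only [e2, map_add, map_sub, extL_wdg]; norm_num [vec8_val]; abel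
lemma eC_e3 : extL ![-1,-1,1,1,-1,-1,1,1] e3 = -e3 := by
  simp only [e3, map_add, extL_wdg]; norm_num [vec8_val]; abel
lemma eD_e1 : extL ![-1,1,-1,1,-1,1,-1,1] e1 = -e1 := by
  simp only [e1, map_add, extL_wdg]; norm_num [vec8_val]; abel
lemma eD_e2 : extL ![-1,1,-1,1,-1,1,-1,1] e2 = e2 := by
  simp only [e2, map_add, map_sub, extL_wdg]; norm_num [vec8_val]
lemma eD_e3 : extL ![-1,1,-1,1,-1,1,-1,1] e3 = -e3 := by
  simp only [e3, map_add, extL_wdg]; norm_num [vec8_val]; abel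

/-- If `g ≠ 0` is centralized by `R₁,…,R₈` and satisfies `PgP⁻¹ = ε₁g`, `QgQ⁻¹ = ε₂g` with
`ε₁,ε₂ ∈ {±1}`, `(ε₁,ε₂) ≠ (1,1)`, then there is a nonzero element `ξ = e ⊗ g` of
`⋀²(ℝ⁸) ⊗ Mₙ(ℝ)` with `e ∈ {e₁,e₂,e₃}` (chosen as `e₃`, `e₁`, `e₂` in the respective sign
cases) fixed by `⋀²A_α ⊗ id`, `⋀²A_β ⊗ id`, `⋀²A_γ ⊗ (X ↦ PXP⁻¹)`, `⋀²A_δ ⊗ (X ↦ QXQ⁻¹)`,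
and `id ⊗ (X ↦ RᵢXRᵢ⁻¹)` for each `i`. -/
theorem stmt11 (n : ℕ) (hn : 1 ≤ n) (P Q : Matrix (Fin n) (Fin n) ℝ)
    (R : Fin 8 → Matrix (Fin n) (Fin n) ℝ)
    (hP : IsUnit P) (hQ : IsUnit Q) (hR : ∀ i, IsUnit (R i))
    (g : Matrix (Fin n) (Fin n) ℝ) (hg : g ≠ 0)
    (ε₁ ε₂ : ℝ) (hε₁ : ε₁ = 1 ∨ ε₁ = -1) (hε₂ : ε₂ = 1 ∨ ε₂ = -1)
    (hne : ¬(ε₁ = 1 ∧ ε₂ = 1))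
    (hRg : ∀ i, R i * g * (R i)⁻¹ = g)
    (hPg : P * g * P⁻¹ = ε₁ • g) (hQg : Q * g * Q⁻¹ = ε₂ • g) :
    ∃ e ∈ ({e1, e2, e3} : Set (ExteriorAlgebra ℝ (Fin 8 → ℝ))),
      ((ε₁ = -1 ∧ ε₂ = -1) → e = e3) ∧
      ((ε₁ = 1 ∧ ε₂ = -1) → e = e1) ∧
      ((ε₁ = -1 ∧ ε₂ = 1) → e = e2) ∧
      e ⊗ₜ[ℝ] g ≠ 0 ∧
      TensorProduct.map (extL ![-1,-1,-1,-1,1,1,1,1]) LinearMap.id (e ⊗ₜ[ℝ] g) = e ⊗ₜ[ℝ] g ∧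
      TensorProduct.map (extL ![1,1,1,1,-1,-1,-1,-1]) LinearMap.id (e ⊗ₜ[ℝ] g) = e ⊗ₜ[ℝ] g ∧
      TensorProduct.map (extL ![-1,-1,1,1,-1,-1,1,1]) (conjL n P) (e ⊗ₜ[ℝ] g) = e ⊗ₜ[ℝ] g ∧
      TensorProduct.map (extL ![-1,1,-1,1,-1,1,-1,1]) (conjL n Q) (e ⊗ₜ[ℝ] g) = e ⊗ₜ[ℝ] g ∧
      (∀ i, TensorProduct.map LinearMap.id (conjL n (R i)) (e ⊗ₜ[ℝ] g) = e ⊗ₜ[ℝ] g) := by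
  have hPc : conjL n P g = ε₁ • g := by rw [conjL_apply, hPg]
  have hQc : conjL n Q g = ε₂ • g := by rw [conjL_apply, hQg]
  have hRc : ∀ i, conjL n (R i) g = g := fun i => by rw [conjL_apply, hRg i]
  rcases hε₁ with h1 | h1 <;> rcases hε₂ with h2 | h2
  · exact absurd ⟨h1, h2⟩ hne
  · -- ε₁ = 1, ε₂ = -1 : e1
    refine ⟨e1, by simp, ?_, fun _ => rfl, ?_, tmul_ne_zero' e1 (phiab 0 1) phi_e1 g hg,
      ?_, ?_, ?_, ?_, ?_⟩
    · rintro ⟨ha, _⟩; rw [h1] at ha; norm_num at ha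
    · rintro ⟨ha, _⟩; rw [h1] at ha; norm_num at ha
    · rw [TensorProduct.map_tmul, eA_e1]; rfl
    · rw [TensorProduct.map_tmul, eB_e1]; rfl
    · rw [TensorProduct.map_tmul, eC_e1, hPc, h1, one_smul]
    · rw [TensorProduct.map_tmul, eD_e1, hQc, h2]
      simp [neg_tmul, tmul_neg, tmul_smul, neg_one_smul]
    · intro i; rw [TensorProduct.map_tmul, hRc i]; rfl
  · -- ε₁ = -1, ε₂ = 1 : e2
    refine ⟨e2, by simp, ?_, ?_, fun _ => rfl, tmul_ne_zero' e2 (phiab 0 2) phi_e2 g hg,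
      ?_, ?_, ?_, ?_, ?_⟩
    · rintro ⟨_, ha⟩; rw [h2] at ha; norm_num at ha
    · rintro ⟨ha, _⟩; rw [h1] at ha; norm_num at ha
    · rw [TensorProduct.map_tmul, eA_e2]; rfl
    · rw [TensorProduct.map_tmul, eB_e2]; rfl
    · rw [TensorProduct.map_tmul, eC_e2, hPc, h1]
      simp [neg_tmul, tmul_neg, tmul_smul, neg_one_smul]
    · rw [TensorProduct.map_tmul, eD_e2, hQc, h2, one_smul]
    · intro i; rw [TensorProduct.map_tmul, hRc i]; rfl
  · -- ε₁ = -1, ε₂ = -1 : e3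
    refine ⟨e3, by simp, fun _ => rfl, ?_, ?_, tmul_ne_zero' e3 (phiab 0 3) phi_e3 g hg,
      ?_, ?_, ?_, ?_, ?_⟩
    · rintro ⟨ha, _⟩; rw [h1] at ha; norm_num at ha
    · rintro ⟨_, ha⟩; rw [h2] at ha; norm_num at ha
    · rw [TensorProduct.map_tmul, eA_e3]; rfl
    · rw [TensorProduct.map_tmul, eB_e3]; rfl
    · rw [TensorProduct.map_tmul, eC_e3, hPc, h1]
      simp [neg_tmul, tmul_neg, tmul_smul, neg_one_smul]
    · rw [TensorProduct.map_tmul, eD_e3, hQc, h2]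
      simp [neg_tmul, tmul_neg, tmul_smul, neg_one_smul]
    · intro i; rw [TensorProduct.map_tmul, hRc i]; rfl
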